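/- arXiv:2402.10210 — 2 statements merged into one kernel-verified Lean document; each statement's English description precedes it below -/
import Mathlib

section
/- In the DDIM forward process with q(x_{t-1} | x_t, x₀) = N(√(α_{t-1}) x₀ + √(1 − α_{t-1} − σ_t²)(x_t − √(α_t) x₀)/√(1 − α_t), σ_t² I) and q(x_T | x₀) = N(√(α_T) x₀, (1 − α_T) I), it holds by backward induction that the marginal q(x_t | x₀) = N(√(α_t) x₀, (1 − α_t) I) for every t ∈ {1,…,T}. -/
open MeasureTheory ProbabilityTheory

/-- Isotropic Gaussian measure on `ℝ^d` (as `Fin d → ℝ`) with mean vector `m`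
and covariance `v • I`, built as a product of one-dimensional Gaussians. -/
noncomputable def isoGaussian (d : ℕ) (m : Fin d → ℝ) (v : NNReal) :
    Measure (Fin d → ℝ) :=
  Measure.pi fun i => gaussianReal (m i) v

open Real
open scoped NNReal ENNReal

lemma gaussianPDFReal_integral_mul (a b m z : ℝ) {v τ : ℝ≥0} (hv : v ≠ 0) (hτ : τ ≠ 0) :
    ∫ y, gaussianPDFReal m v y * gaussianPDFReal (a * y + b) τ z
      = gaussianPDFReal (a * m + b) (⟨a ^ 2, sq_nonneg a⟩ * v + τ) z := by
  have hV : (0:ℝ) < v := lt_of_le_of_ne v.coe_nonneg (by exact_mod_cast Ne.symm hv)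
  have ht : (0:ℝ) < τ := lt_of_le_of_ne τ.coe_nonneg (by exact_mod_cast Ne.symm hτ)
  set S : ℝ := a ^ 2 * v + τ with hS
  have hSpos : 0 < S := by positivity
  set w : ℝ := z - (a * m + b) with hw
  set k : ℝ := S / (2 * v * τ) with hk
  have hkpos : 0 < k := by positivity
  set d0 : ℝ := m + a * v * w / S with hd0
  have hcoe : ((⟨a ^ 2, sq_nonneg a⟩ * v + τ : ℝ≥0) : ℝ) = S := by
    push_cast; rfl
  have hpt : ∀ y, gaussianPDFReal m v y * gaussianPDFReal (a * y + b) τ z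
      = ((√(2 * π * v))⁻¹ * (√(2 * π * τ))⁻¹ * rexp (-w ^ 2 / (2 * S)))
        * rexp (-k * (y - d0) ^ 2) := by
    intro y
    unfold gaussianPDFReal
    have hexp : -(y - m) ^ 2 / (2 * (v:ℝ)) + -(z - (a * y + b)) ^ 2 / (2 * (τ:ℝ))
        = -w ^ 2 / (2 * S) + -k * (y - d0) ^ 2 := by
      rw [hd0, hk, hw, hS]
      field_simp
      ring
    rw [mul_mul_mul_comm, ← Real.exp_add, hexp, Real.exp_add]
    ring
  rw [integral_congr_ae (Filter.Eventually.of_forall hpt),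
    integral_const_mul _ _]
  have hshift : ∫ y : ℝ, rexp (-k * (y - d0) ^ 2) = ∫ y : ℝ, rexp (-k * y ^ 2) :=
    integral_sub_right_eq_self (fun u => rexp (-k * u ^ 2)) d0
  rw [hshift, integral_gaussian]
  unfold gaussianPDFReal
  rw [hcoe]
  have hc : (√(2 * π * v))⁻¹ * (√(2 * π * τ))⁻¹ * √(π / k) = (√(2 * π * S))⁻¹ := by
    rw [← Real.sqrt_inv, ← Real.sqrt_inv, ← Real.sqrt_mul (by positivity),
      ← Real.sqrt_mul (by positivity), ← Real.sqrt_inv]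
    congr 1
    rw [hk]
    have hπ : (0:ℝ) < π := Real.pi_pos
    field_simp
  calc (√(2 * π * ↑v))⁻¹ * (√(2 * π * ↑τ))⁻¹ * rexp (-w ^ 2 / (2 * S)) * √(π / k)
      = ((√(2 * π * ↑v))⁻¹ * (√(2 * π * ↑τ))⁻¹ * √(π / k)) * rexp (-w ^ 2 / (2 * S)) := by ring
    _ = (√(2 * π * S))⁻¹ * rexp (-(z - (a * m + b)) ^ 2 / (2 * S)) := by rw [hc, hw]

lemma measurable_gaussianReal_affine (a b : ℝ) (τ : ℝ≥0) :
    Measurable fun y : ℝ => gaussianReal (a * y + b) τ := by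
  have heq : ∀ y : ℝ, gaussianReal (a * y + b) τ
      = (gaussianReal 0 τ).map (· + (a * y + b)) := by
    intro y
    rw [gaussianReal_map_add_const, zero_add]
  rw [Measure.measurable_measure]
  intro s hs
  simp_rw [heq, Measure.map_apply (measurable_add_const _) hs]
  have ht : MeasurableSet {p : ℝ × ℝ | p.2 + (a * p.1 + b) ∈ s} :=
    (measurable_snd.add ((measurable_fst.const_mul a).add_const b)) hs
  exact measurable_measure_prodMk_left ht

lemma gaussianReal_bind_affine (m : ℝ) (v τ : ℝ≥0) (a b : ℝ) :
    (gaussianReal m v).bind (fun y => gaussianReal (a * y + b) τ)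
      = gaussianReal (a * m + b) (⟨a ^ 2, sq_nonneg a⟩ * v + τ) := by
  by_cases hv : v = 0
  · subst hv
    rw [gaussianReal_zero_var, Measure.dirac_bind (measurable_gaussianReal_affine a b τ)]
    congr 1
    apply NNReal.eq
    show (τ : ℝ) = a ^ 2 * 0 + τ
    simp
  by_cases hτ : τ = 0
  · subst hτ
    have hmap : (fun y : ℝ => gaussianReal (a * y + b) 0) = fun y => Measure.dirac (a * y + b) := by
      funext y; rw [gaussianReal_zero_var]
    rw [hmap]
    have hf : Measurable fun y : ℝ => a * y + b := (measurable_id.const_mul a).add_const b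
    have : (gaussianReal m v).bind (fun y => Measure.dirac (a * y + b))
        = (gaussianReal m v).map (fun y => a * y + b) :=
      Measure.bind_dirac_eq_map _ hf
    rw [this]
    have : (fun y : ℝ => a * y + b) = (· + b) ∘ (a * ·) := rfl
    rw [this, ← Measure.map_map (measurable_add_const b) (measurable_const_mul a),
      gaussianReal_map_const_mul, gaussianReal_map_add_const]
    simp
    rfl
  · ext s hs
    rw [Measure.bind_apply hs (measurable_gaussianReal_affine a b τ).aemeasurable]
    have hSne : (⟨a ^ 2, sq_nonneg a⟩ * v + τ : ℝ≥0) ≠ 0 := by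
      intro h
      exact hτ (by simpa using (add_eq_zero.mp h).2)
    rw [gaussianReal_apply _ hSne]
    have hg : Measurable fun y : ℝ => gaussianReal (a * y + b) τ s :=
      (Measure.measurable_coe hs).comp (measurable_gaussianReal_affine a b τ)
    rw [gaussianReal_of_var_ne_zero m hv,
      lintegral_withDensity_eq_lintegral_mul _ (measurable_gaussianPDF m v) hg]
    simp only [Pi.mul_apply, Function.comp]
    have hmeaspdf : ∀ c : ℝ, Measurable fun y : ℝ => gaussianPDFReal (a * y + b) τ c := by
      intro c
      unfold gaussianPDFReal
      exact (((measurable_const.sub ((measurable_id.const_mul a).add_const b)).pow_const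
        2).neg.div_const _).exp.const_mul _
    have hstep1 : ∀ y : ℝ, gaussianPDF m v y * gaussianReal (a * y + b) τ s
        = ∫⁻ z in s, gaussianPDF m v y * gaussianPDF (a * y + b) τ z ∂volume := by
      intro y
      rw [gaussianReal_apply _ hτ, lintegral_const_mul _ (measurable_gaussianPDF _ τ)]
    simp_rw [hstep1]
    have hjoint : AEMeasurable (Function.uncurry fun y z : ℝ =>
        gaussianPDF m v y * gaussianPDF (a * y + b) τ z)
        ((volume : Measure ℝ).prod (volume.restrict s)) := by
      refine Measurable.aemeasurable ?_
      refine Measurable.mul (M := ℝ≥0∞) (f := fun p : ℝ × ℝ => gaussianPDF m v p.1)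
        (g := fun p : ℝ × ℝ => gaussianPDF (a * p.1 + b) τ p.2) ?_ ?_
      · exact (measurable_gaussianPDF m v).comp measurable_fst
      · unfold gaussianPDF
        refine Measurable.ennreal_ofReal ?_
        unfold gaussianPDFReal
        exact (((measurable_snd.sub ((measurable_fst.const_mul a).add_const
          b)).pow_const 2).neg.div_const _).exp.const_mul _
    rw [lintegral_lintegral_swap hjoint]
    refine lintegral_congr fun z => ?_
    have hbound : ∀ y : ℝ, ‖gaussianPDFReal (a * y + b) τ z‖ ≤ (Real.sqrt (2 * π * τ))⁻¹ := by
      intro y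
      rw [Real.norm_of_nonneg (gaussianPDFReal_nonneg _ _ _)]
      unfold gaussianPDFReal
      refine mul_le_of_le_one_right (by positivity) ?_
      rw [Real.exp_le_one_iff]
      have hτ' : (0:ℝ) < τ := lt_of_le_of_ne τ.coe_nonneg (by exact_mod_cast Ne.symm hτ)
      apply div_nonpos_of_nonpos_of_nonneg
      · simp [sq_nonneg]
      · positivity
    have hint : Integrable (fun y => gaussianPDFReal m v y * gaussianPDFReal (a * y + b) τ z)
        volume := by
      have := (integrable_gaussianPDFReal m v).bdd_mul
        (hmeaspdf z).aestronglyMeasurable (Filter.Eventually.of_forall hbound)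
      simpa [mul_comm] using this
    calc ∫⁻ y, gaussianPDF m v y * gaussianPDF (a * y + b) τ z ∂volume
        = ∫⁻ y, ENNReal.ofReal
            (gaussianPDFReal m v y * gaussianPDFReal (a * y + b) τ z) ∂volume := by
          refine lintegral_congr fun y => ?_
          rw [gaussianPDF_def, gaussianPDF_def,
            ENNReal.ofReal_mul (gaussianPDFReal_nonneg _ _ _)]
      _ = ENNReal.ofReal (∫ y, gaussianPDFReal m v y * gaussianPDFReal (a * y + b) τ z) := by
          rw [← ofReal_integral_eq_lintegral_ofReal hint
            (Filter.Eventually.of_forall fun y =>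
              mul_nonneg (gaussianPDFReal_nonneg _ _ _) (gaussianPDFReal_nonneg _ _ _))]
      _ = gaussianPDF (a * m + b) (⟨a ^ 2, sq_nonneg a⟩ * v + τ) z := by
          rw [gaussianPDFReal_integral_mul a b m z hv hτ, gaussianPDF_def]

lemma lintegral_pi_prod : ∀ (n : ℕ) (ν : Fin n → Measure ℝ),
    (∀ i, IsProbabilityMeasure (ν i)) → ∀ (g : Fin n → ℝ → ℝ≥0∞), (∀ i, Measurable (g i)) →
    ∫⁻ x, ∏ i, g i (x i) ∂Measure.pi ν = ∏ i, ∫⁻ y, g i y ∂ν i := by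
  intro n
  induction n with
  | zero =>
    intro ν hν g hg
    haveI := hν
    simp [lintegral_const]
  | succ n ih =>
    intro ν hν g hg
    haveI := hν
    have hmp := measurePreserving_piFinSuccAbove ν 0
    have hf : Measurable fun p : ℝ × (Fin n → ℝ) =>
        g 0 p.1 * ∏ j : Fin n, g ((0 : Fin (n+1)).succAbove j) (p.2 j) := by
      refine ((hg 0).comp measurable_fst).mul ?_
      exact Finset.measurable_prod _ fun j _ =>
        (hg _).comp ((measurable_pi_apply j).comp measurable_snd)
    have hcomp := hmp.lintegral_comp hf
    have heq : ∀ x : Fin (n+1) → ℝ,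
        g 0 ((MeasurableEquiv.piFinSuccAbove (fun _ => ℝ) 0 x).1)
          * ∏ j : Fin n, g ((0 : Fin (n+1)).succAbove j)
            ((MeasurableEquiv.piFinSuccAbove (fun _ => ℝ) 0 x).2 j)
        = ∏ i, g i (x i) := by
      intro x
      rw [Fin.prod_univ_succAbove (fun i => g i (x i)) 0]
      rfl
    simp_rw [heq] at hcomp
    have h2 : Measurable fun y : Fin n → ℝ => ∏ j : Fin n, g ((0 : Fin (n+1)).succAbove j) (y j) :=
      Finset.measurable_prod _ fun j _ => (hg _).comp (measurable_pi_apply j)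
    rw [hcomp, lintegral_prod_mul (f := g 0)
      (g := fun y : Fin n → ℝ => ∏ j : Fin n, g ((0 : Fin (n+1)).succAbove j) (y j))
      ((hg 0).aemeasurable) h2.aemeasurable]
    rw [ih (fun j => ν ((0 : Fin (n+1)).succAbove j)) (fun j => hν _)
      (fun j => g ((0 : Fin (n+1)).succAbove j)) (fun j => hg _)]
    rw [Fin.prod_univ_succAbove (fun i => ∫⁻ y, g i y ∂ν i) 0]

lemma pi_map_coordwise {n : ℕ} (ν : Fin n → Measure ℝ) [∀ i, IsProbabilityMeasure (ν i)]
    (f : Fin n → ℝ → ℝ) (hf : ∀ i, Measurable (f i)) :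
    (Measure.pi ν).map (fun x i => f i (x i)) = Measure.pi (fun i => (ν i).map (f i)) := by
  haveI : ∀ i, IsProbabilityMeasure ((ν i).map (f i)) :=
    fun i => Measure.isProbabilityMeasure_map (hf i).aemeasurable
  refine (Measure.pi_eq fun s hs => ?_).symm
  have hmeas : Measurable fun (x : Fin n → ℝ) (i : Fin n) => f i (x i) :=
    measurable_pi_lambda _ fun i => (hf i).comp (measurable_pi_apply i)
  rw [Measure.map_apply hmeas (MeasurableSet.univ_pi hs)]
  have hpre : (fun x (i : Fin n) => f i (x i)) ⁻¹' Set.pi Set.univ s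
      = Set.pi Set.univ (fun i => f i ⁻¹' s i) := by
    ext x; simp [Set.mem_pi]
  rw [hpre, Measure.pi_pi]
  exact Finset.prod_congr rfl fun i _ => (Measure.map_apply (hf i) (hs i)).symm

instance isoGaussian_isProbabilityMeasure (d : ℕ) (m : Fin d → ℝ) (v : ℝ≥0) :
    IsProbabilityMeasure (isoGaussian d m v) := by
  unfold isoGaussian; infer_instance

lemma isoGaussian_translate (d : ℕ) (c : Fin d → ℝ) (τ : ℝ≥0) :
    (isoGaussian d 0 τ).map (fun z i => z i + c i) = isoGaussian d c τ := by
  unfold isoGaussian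
  rw [pi_map_coordwise _ _ (fun i => measurable_add_const (c i))]
  congr 1
  funext i
  rw [gaussianReal_map_add_const]
  simp

lemma measurable_isoGaussian_comp {d : ℕ} (τ : ℝ≥0) (c : (Fin d → ℝ) → (Fin d → ℝ))
    (hc : Measurable c) : Measurable fun x => isoGaussian d (c x) τ := by
  rw [Measure.measurable_measure]
  intro s hs
  have heq : ∀ x, isoGaussian d (c x) τ
      = (isoGaussian d 0 τ).map (fun z i => z i + c x i) :=
    fun x => (isoGaussian_translate d (c x) τ).symm
  have hmeas : ∀ x, Measurable (fun (z : Fin d → ℝ) (i : Fin d) => z i + c x i) :=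
    fun x => measurable_pi_lambda _ fun i => (measurable_pi_apply i).add_const _
  simp_rw [heq, Measure.map_apply (hmeas _) hs]
  have ht : MeasurableSet {p : (Fin d → ℝ) × (Fin d → ℝ) | (fun i => p.2 i + c p.1 i) ∈ s} := by
    refine (measurable_pi_lambda _ fun i => ?_) hs
    exact ((measurable_pi_apply i).comp measurable_snd).add
      (((measurable_pi_apply i).comp hc).comp measurable_fst)
  exact measurable_measure_prodMk_left ht

lemma isoGaussian_bind (d : ℕ) (m : Fin d → ℝ) (v τ : ℝ≥0) (a : ℝ) (b : Fin d → ℝ) :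
    (isoGaussian d m v).bind (fun x => isoGaussian d (fun i => a * x i + b i) τ)
      = isoGaussian d (fun i => a * m i + b i) (⟨a ^ 2, sq_nonneg a⟩ * v + τ) := by
  have hker : Measurable fun x : Fin d → ℝ => isoGaussian d (fun i => a * x i + b i) τ :=
    measurable_isoGaussian_comp τ _
      (measurable_pi_lambda _ fun i => ((measurable_pi_apply (X := fun _ : Fin d => ℝ) i).const_mul a).add_const (b i))
  refine Eq.symm (Measure.pi_eq fun s hs => ?_)
  rw [Measure.bind_apply (MeasurableSet.univ_pi hs) hker.aemeasurable]
  have hrect : ∀ x : Fin d → ℝ,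
      isoGaussian d (fun i => a * x i + b i) τ (Set.pi Set.univ s)
        = ∏ i, gaussianReal (a * x i + b i) τ (s i) := by
    intro x; unfold isoGaussian; rw [Measure.pi_pi]
  simp_rw [hrect]
  have hprod := lintegral_pi_prod d (fun i => gaussianReal (m i) v) (fun i => inferInstance)
    (fun i y => gaussianReal (a * y + b i) τ (s i))
    (fun i => (Measure.measurable_coe (hs i)).comp (measurable_gaussianReal_affine a (b i) τ))
  show ∫⁻ x, ∏ i, (fun i y => gaussianReal (a * y + b i) τ (s i)) i (x i)
      ∂Measure.pi (fun i => gaussianReal (m i) v) = _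
  rw [hprod]
  refine Finset.prod_congr rfl fun i _ => ?_
  rw [← gaussianReal_bind_affine (m i) v τ a (b i),
    Measure.bind_apply (hs i) (measurable_gaussianReal_affine a (b i) τ).aemeasurable]

theorem ddim_marginal_consistency
    (d T : ℕ) (hT : 1 ≤ T) (x₀ : Fin d → ℝ)
    (α : ℕ → ℝ) (σ : ℕ → ℝ)
    (hα0 : α 0 = 1)
    (hαpos : ∀ t, t ≤ T → 0 < α t)
    (hαanti : ∀ s t, s ≤ t → t ≤ T → α t ≤ α s)
    (hαlt : ∀ s t, s < t → t ≤ T → α t < α s)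
    (hσnonneg : ∀ t, 1 ≤ t → t ≤ T → 0 ≤ σ t)
    (hσle : ∀ t, 1 ≤ t → t ≤ T → σ t ^ 2 ≤ 1 - α (t - 1))
    (q : ℕ → Measure (Fin d → ℝ))
    (hqT : q T = isoGaussian d (fun i => Real.sqrt (α T) * x₀ i) (1 - α T).toNNReal)
    (hrec : ∀ t, 1 ≤ t → t ≤ T →
        q (t - 1) = (q t).bind (fun xt => isoGaussian d
            (fun i => Real.sqrt (α (t - 1)) * x₀ i
              + Real.sqrt (1 - α (t - 1) - σ t ^ 2)
                * (xt i - Real.sqrt (α t) * x₀ i) / Real.sqrt (1 - α t))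
            ((σ t ^ 2).toNNReal))) :
    ∀ t, 1 ≤ t → t ≤ T →
      q t = isoGaussian d (fun i => Real.sqrt (α t) * x₀ i) (1 - α t).toNNReal := by
  have key : ∀ k t, 1 ≤ t → t ≤ T → T - t = k →
      q t = isoGaussian d (fun i => Real.sqrt (α t) * x₀ i) (1 - α t).toNNReal := by
    intro k
    induction k with
    | zero =>
      intro t h1 h2 h3
      have : t = T := by omega
      subst this
      exact hqT
    | succ k ih =>
      intro t h1 h2 h3
      have ht1 : t + 1 ≤ T := by omega
      have hq' := ih (t + 1) (by omega) ht1 (by omega)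
      have hrec' := hrec (t + 1) (by omega) ht1
      simp only [Nat.add_sub_cancel] at hrec'
      -- facts
      have hαt1_lt : α (t + 1) < 1 := by
        have := hαlt 0 (t + 1) (by omega) ht1
        rwa [hα0] at this
      have hs_pos : (0:ℝ) < 1 - α (t + 1) := by linarith
      have hsq : Real.sqrt (1 - α (t + 1)) ≠ 0 := by positivity
      have hσ2 : σ (t + 1) ^ 2 ≤ 1 - α t := by
        have := hσle (t + 1) (by omega) ht1
        simpa using this
      have hσ2nn : (0:ℝ) ≤ σ (t + 1) ^ 2 := sq_nonneg _
      have hc_nn : (0:ℝ) ≤ 1 - α t - σ (t + 1) ^ 2 := by linarith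
      have hαt_le : (0:ℝ) ≤ 1 - α t := by linarith
      set a : ℝ := Real.sqrt (1 - α t - σ (t + 1) ^ 2) / Real.sqrt (1 - α (t + 1)) with ha
      set b : Fin d → ℝ := fun i =>
        Real.sqrt (α t) * x₀ i - a * (Real.sqrt (α (t + 1)) * x₀ i) with hb
      have hkernel : (fun xt : Fin d → ℝ => isoGaussian d
            (fun i => Real.sqrt (α t) * x₀ i
              + Real.sqrt (1 - α t - σ (t + 1) ^ 2)
                * (xt i - Real.sqrt (α (t + 1)) * x₀ i) / Real.sqrt (1 - α (t + 1)))
            ((σ (t + 1) ^ 2).toNNReal))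
          = fun xt => isoGaussian d (fun i => a * xt i + b i) ((σ (t + 1) ^ 2).toNNReal) := by
        funext xt
        congr 1
        funext i
        rw [hb, ha]
        field_simp
        ring
      rw [hrec', hq', hkernel, isoGaussian_bind]
      congr 1
      · funext i
        rw [hb]
        ring
      · -- variance identity
        have hcoe : ((⟨a ^ 2, sq_nonneg a⟩ * (1 - α (t + 1)).toNNReal
            + (σ (t + 1) ^ 2).toNNReal : ℝ≥0) : ℝ) = ((1 - α t).toNNReal : ℝ) := by
          push_cast
          show a ^ 2 * ((1 - α (t + 1)).toNNReal : ℝ) + ((σ (t + 1) ^ 2).toNNReal : ℝ) = ((1 - α t).toNNReal : ℝ)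
          rw [Real.coe_toNNReal _ hs_pos.le, Real.coe_toNNReal _ hσ2nn,
            Real.coe_toNNReal _ hαt_le]
          have ha2 : a ^ 2 = (1 - α t - σ (t + 1) ^ 2) / (1 - α (t + 1)) := by
            rw [ha, div_pow, Real.sq_sqrt hc_nn, Real.sq_sqrt hs_pos.le]
          rw [ha2, div_mul_cancel₀ _ (ne_of_gt hs_pos)]
          ring
        exact NNReal.coe_injective hcoe
  intro t h1 h2
  exact key (T - t) t h1 h2 rfl
end

section
/- With σ_t = √((1 − α_{t-1})/(1 − α_t)) · √(1 − α_t/α_{t-1}) for 0 < α_t < α_{t-1} ≤ 1, the DDIM posterior mean √(α_{t-1}) x₀ + √(1 − α_{t-1} − σ_t²) · (x_t − √(α_t) x₀)/√(1 − α_t) equals the DDPM posterior mean (√(α_t/α_{t-1})(1 − α_{t-1}) x_t + √(α_{t-1})(1 − α_t/α_{t-1}) x₀)/(1 − α_t), for all x₀, x_t ∈ ℝ^d. -/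
theorem ddim_reduces_to_ddpm_posterior_mean {d : ℕ}
    (αprev αt : ℝ)
    (h1 : 0 < αt) (h2 : αt < αprev) (h3 : αprev ≤ 1)
    (σ : ℝ)
    (hσ : σ = Real.sqrt ((1 - αprev) / (1 - αt)) * Real.sqrt (1 - αt / αprev))
    (x₀ xt : EuclideanSpace ℝ (Fin d)) :
    Real.sqrt αprev • x₀
        + (Real.sqrt (1 - αprev - σ ^ 2) / Real.sqrt (1 - αt)) • (xt - Real.sqrt αt • x₀)
      = ((Real.sqrt (αt / αprev) * (1 - αprev)) / (1 - αt)) • xt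
        + ((Real.sqrt αprev * (1 - αt / αprev)) / (1 - αt)) • x₀ := by
  have hp : (0:ℝ) < αprev := h1.trans h2
  have ht1 : (0:ℝ) < 1 - αt := by linarith
  have hp1 : (0:ℝ) ≤ 1 - αprev := by linarith
  have hrat : (0:ℝ) ≤ 1 - αt / αprev := by
    have : αt / αprev ≤ 1 := (div_le_one hp).mpr h2.le
    linarith
  have hσ2 : σ ^ 2 = (1 - αprev) / (1 - αt) * (1 - αt / αprev) := by
    rw [hσ, mul_pow, Real.sq_sqrt (by positivity), Real.sq_sqrt hrat]
  have key : 1 - αprev - σ ^ 2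
      = (Real.sqrt αt * (1 - αprev) / (Real.sqrt αprev * Real.sqrt (1 - αt))) ^ 2 := by
    rw [hσ2, div_pow, mul_pow, mul_pow, Real.sq_sqrt h1.le, Real.sq_sqrt hp.le,
      Real.sq_sqrt ht1.le]
    field_simp
    ring
  have hsq : Real.sqrt (1 - αprev - σ ^ 2)
      = Real.sqrt αt * (1 - αprev) / (Real.sqrt αprev * Real.sqrt (1 - αt)) := by
    rw [key, Real.sqrt_sq (by positivity)]
  have hdiv : Real.sqrt (αt / αprev) = Real.sqrt αt / Real.sqrt αprev :=
    Real.sqrt_div h1.le _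
  rw [hsq, hdiv]
  set A := Real.sqrt αprev with hAdef
  set B := Real.sqrt αt with hBdef
  set C := Real.sqrt (1 - αt) with hCdef
  have hA : αprev = A ^ 2 := (Real.sq_sqrt hp.le).symm
  have hB : αt = B ^ 2 := (Real.sq_sqrt h1.le).symm
  have hC : C ^ 2 = 1 - B ^ 2 := by rw [hCdef, Real.sq_sqrt ht1.le, hB]
  have hA0 : A ≠ 0 := by positivity
  have hC0 : C ≠ 0 := by rw [hCdef]; positivity
  rw [hA, hB, ← hC]
  match_scalars
  · field_simp
    linear_combination (A ^ 2) * hC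
  · field_simp
end
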